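/- For n ≥ 2, the discriminant of the trinomial X^n + pX + q equals (-1)^{n(n-1)/2} n^n q^{n-1} + (-1)^{(n-1)(n-2)/2} (n-1)^{n-1} p^n. -/

import Mathlib

open Polynomial

theorem msprod_swap {α β M : Type*} [CommMonoid M] (A : Multiset α) (B : Multiset β)
    (f : α → β → M) :
    (A.map fun a => (B.map fun b => f a b).prod).prod
      = (B.map fun b => (A.map fun a => f a b).prod).prod := by
  induction A using Multiset.induction with
  | empty => simp
  | cons a A ih => simp [ih, Multiset.prod_map_mul]

theorem msprod_map_congr {α M : Type*} [CommMonoid M] {A : Multiset α} {f g : α → M}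
    (h : ∀ x ∈ A, f x = g x) : (A.map f).prod = (A.map g).prod := by
  rw [Multiset.map_congr rfl h]

theorem eval_prod_X_sub_C (M : Multiset ℂ) (x : ℂ) :
    eval x (M.map fun a => X - C a).prod = (M.map fun a => x - a).prod := by
  rw [eval_multiset_prod, Multiset.map_map]
  simp

theorem nat_tri (n : ℕ) (hn : 2 ≤ n) : n*(n-1)/2 = (n-1)*(n-2)/2 + (n-1) := by
  obtain ⟨m, rfl⟩ : ∃ m, n = m + 2 := ⟨n - 2, by omega⟩
  show (m+2)*(m+1)/2 = (m+1)*m/2 + (m+1)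
  obtain ⟨k, hk⟩ := Nat.even_mul_succ_self m
  have h2 : (m+2)*(m+1) = m*(m+1) + 2*(m+1) := by ring
  have h3 : (m+1)*m = m*(m+1) := by ring
  rw [h3]
  generalize hA : m*(m+1) = a at hk h2
  generalize hB : (m+2)*(m+1) = b at h2
  omega

/-- The discriminant of a monic polynomial over `ℂ`, defined as
`∏_{i<j} (α_i - α_j)^2 = (-1)^{n(n-1)/2} ∏_i f'(α_i)` where the `α_i` are the
roots with multiplicity. -/
noncomputable def disc (f : Polynomial ℂ) : ℂ :=
  (-1 : ℂ) ^ (f.natDegree * (f.natDegree - 1) / 2) *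
    (f.roots.map (fun r => Polynomial.eval r (Polynomial.derivative f))).prod

/-- For `n ≥ 2`, the discriminant of `X^n + pX + q` equals
`(-1)^{n(n-1)/2} n^n q^{n-1} + (-1)^{(n-1)(n-2)/2} (n-1)^{n-1} p^n`. -/
theorem disc_trinomial (n : ℕ) (hn : 2 ≤ n) (p q : ℂ) :
    disc (X ^ n + C p * X + C q) =
      (-1 : ℂ) ^ (n * (n - 1) / 2) * (n : ℂ) ^ n * q ^ (n - 1) +
        (-1 : ℂ) ^ ((n - 1) * (n - 2) / 2) * ((n - 1 : ℕ) : ℂ) ^ (n - 1) * p ^ n := by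
  have hn0 : (n : ℂ) ≠ 0 := Nat.cast_ne_zero.mpr (by omega)
  have hne1 : ((n : ℂ) - 1) ≠ 0 := sub_ne_zero.mpr (by
    intro h
    have : n = 1 := by exact_mod_cast h
    omega)
  have hmon : (X ^ n + C p * X + C q : ℂ[X]).Monic := by
    monicity!
    simp [show 1 ≤ n by omega, show ¬ n ≤ 1 by omega]
  have hdeg : (X ^ n + C p * X + C q : ℂ[X]).natDegree = n := by
    compute_degree! <;> first | omega | simp [show n ≠ 1 by omega, show n ≠ 0 by omega]
  have hder : derivative (X ^ n + C p * X + C q : ℂ[X])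
      = C (n:ℂ) * (X ^ (n-1) + C (p / n)) := by
    simp only [derivative_add, derivative_X_pow, derivative_C, derivative_mul, derivative_X,
      mul_one, add_zero, mul_zero, zero_add, mul_add, ← C_mul, mul_div_cancel₀ _ hn0]
    simp [C_eq_natCast]
  set f : ℂ[X] := X ^ n + C p * X + C q with hf
  set g : ℂ[X] := X ^ (n-1) + C (p / n) with hg
  have hgmon : g.Monic := monic_X_pow_add_C _ (by omega)
  have hgdeg : g.natDegree = n - 1 := by
    rw [hg]; compute_degree!; simp [show n - 1 ≠ 0 by omega]
  set A := f.roots with hA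
  set B := g.roots with hB
  have hcardA : Multiset.card A = n := by
    rw [hA, ← hdeg]; exact splits_iff_card_roots.mp (IsAlgClosed.splits f)
  have hcardB : Multiset.card B = n - 1 := by
    rw [hB, ← hgdeg]; exact splits_iff_card_roots.mp (IsAlgClosed.splits g)
  have hfprod : f = (A.map fun a => X - C a).prod :=
    (IsAlgClosed.splits f).eq_prod_roots_of_monic hmon
  have hgprod : g = (B.map fun a => X - C a).prod :=
    (IsAlgClosed.splits g).eq_prod_roots_of_monic hgmon
  set c : ℂ := ((n : ℂ) - 1) * p / n with hc
  have step1 : (A.map fun r => eval r (derivative f)).prod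
      = (n:ℂ)^n * (B.map fun b => eval b f).prod := by
    calc (A.map fun r => eval r (derivative f)).prod
        = (A.map fun r => (n:ℂ) * eval r g).prod := by
          simp only [hder, eval_mul, eval_C]
      _ = (A.map fun _ => (n:ℂ)).prod * (A.map fun r => eval r g).prod :=
          Multiset.prod_map_mul
      _ = (n:ℂ)^n * (A.map fun r => (B.map fun b => r - b).prod).prod := by
          rw [Multiset.map_const', Multiset.prod_replicate, hcardA]
          congr 1
          apply msprod_map_congr
          intro r _
          rw [hgprod, eval_prod_X_sub_C]
      _ = (n:ℂ)^n * (B.map fun b => (A.map fun r => r - b).prod).prod := by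
          rw [msprod_swap]
      _ = (n:ℂ)^n * (B.map fun b => ((-1:ℂ))^n * eval b f).prod := by
          congr 1
          apply msprod_map_congr
          intro b _
          have h1 : (A.map fun r => r - b).prod = (A.map fun r => (-1:ℂ) * (b - r)).prod :=
            msprod_map_congr (fun r _ => by ring)
          rw [h1, Multiset.prod_map_mul, Multiset.map_const', Multiset.prod_replicate,
            hcardA, hfprod, eval_prod_X_sub_C]
      _ = (n:ℂ)^n * (B.map fun b => eval b f).prod := by
          rw [Multiset.prod_map_mul, Multiset.map_const', Multiset.prod_replicate, hcardB,
            ← pow_mul]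
          have hev : Even (n * (n-1)) := by
            rcases Nat.even_or_odd n with h | h
            · exact h.mul_right _
            · exact (Nat.Odd.sub_odd h odd_one).mul_left _
          rw [hev.neg_one_pow, one_mul]
  -- evaluate f at roots of g
  have step2 : ∀ b ∈ B, eval b f = c * b + q := by
    intro b hb
    have hroot : eval b g = 0 := isRoot_of_mem_roots hb
    have hbpow : b ^ (n-1) = -(p / n) := by
      rw [hg] at hroot
      simp at hroot
      linear_combination hroot
    have hbn : b ^ n = b ^ (n-1) * b := by
      rw [← pow_succ]
      congr 1
      omega
    rw [hf]
    simp only [eval_add, eval_mul, eval_pow, eval_X, eval_C]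
    rw [hbn, hbpow, hc]
    field_simp
    ring
  have step3 : (n:ℂ)^n * (B.map fun b => eval b f).prod
      = (n:ℂ)^n * q^(n-1) + (-1:ℂ)^(n-1) * ((n:ℂ) - 1)^(n-1) * p^n := by
    rw [msprod_map_congr step2]
    have key : (n:ℂ)^n = (n:ℂ)^(n-1) * n := by
      rw [← pow_succ]
      congr 1
      omega
    by_cases hp : p = 0
    · subst hp
      have hc0 : c = 0 := by rw [hc]; ring
      rw [hc0]
      simp only [zero_mul, zero_add]
      rw [Multiset.map_const', Multiset.prod_replicate, hcardB]
      rw [zero_pow (by omega : n ≠ 0)]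
      ring
    · have hcne : c ≠ 0 := by
        rw [hc]
        exact div_ne_zero (mul_ne_zero hne1 hp) hn0
      have h1 : ∀ b ∈ B, c * b + q = (-c) * ((-q/c) - b) := by
        intro b _
        field_simp
        ring
      rw [msprod_map_congr h1, Multiset.prod_map_mul, Multiset.map_const',
        Multiset.prod_replicate, hcardB]
      have h2 : (B.map fun b => (-q/c) - b).prod = eval (-q/c) g := by
        rw [hgprod, eval_prod_X_sub_C]
      rw [h2, hg]
      simp only [eval_add, eval_pow, eval_X, eval_C]
      have e1 : ((-c) * (-q/c)) = q := by field_simp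
      have e3 : (n:ℂ)^n * (c^(n-1) * (p/n)) = ((n:ℂ)-1)^(n-1) * p^n := by
        rw [key, hc, div_pow, mul_pow]
        have hpn : p ^ n = p ^ (n-1) * p := by rw [← pow_succ]; congr 1; omega
        rw [hpn]
        field_simp
      calc (n:ℂ)^n * ((-c)^(n-1) * ((-q/c)^(n-1) + p/n))
          = (n:ℂ)^n * ((-c) * (-q/c))^(n-1)
            + (-1:ℂ)^(n-1) * ((n:ℂ)^n * (c^(n-1) * (p/n))) := by
            rw [mul_pow, neg_pow c]
            ring
        _ = (n:ℂ)^n * q^(n-1) + (-1:ℂ)^(n-1) * (((n:ℂ)-1)^(n-1) * p^n) := by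
            rw [e1, e3]
        _ = (n:ℂ)^n * q^(n-1) + (-1:ℂ)^(n-1) * ((n:ℂ)-1)^(n-1) * p^n := by ring
  -- assemble
  have hcast : ((n - 1 : ℕ) : ℂ) = (n : ℂ) - 1 := by
    push_cast [Nat.cast_sub (by omega : 1 ≤ n)]
    ring
  rw [disc, hdeg, step1, step3, hcast, mul_add]
  congr 1
  · ring
  · rw [nat_tri n hn, pow_add]
    have h1 : ((-1:ℂ))^(n-1) * (-1)^(n-1) = 1 := by
      rw [← pow_add]
      exact Even.neg_one_pow ⟨n-1, rfl⟩
    linear_combination ((-1:ℂ))^((n-1)*(n-2)/2) * ((n:ℂ)-1)^(n-1) * p^n * h1
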